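/- Let V be a smooth k-linear G-representation and W ⊆ V a G-stable subspace on which S is locally nilpotent (for every x ∈ W there is n ≥ 1 with Sⁿ·x = 0). Let w ∈ V, λ₀ ∈ k with λ₀ ≠ 0, and ψ : H → kˣ a group homomorphism, and assume: u·w − w ∈ W for all u ∈ I₁; h·w − ψ(h)·w ∈ W for all h ∈ H; and S·w − λ₀·w ∈ W. Then there exists w' ∈ V with w' − w ∈ W such that u·w' = w' for all u ∈ I₁, h·w' = ψ(h)·w' for all h ∈ H, and S·w' = λ₀·w'. (The technical core of the proof of Theorem 5.2 of the paper: lifting an I₁-invariant Hecke eigenvector along a quotient by a subrepresentation on which S is locally nilpotent.) -/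

import Mathlib

open Matrix

/-- The matrix `(t, Cλ; 0, 1)` as an element of `G = GL₂(F((t)))`. -/
noncomputable def SMat {F : Type*} [Field F] (l : F) : GL (Fin 2) (LaurentSeries F) :=
  Matrix.GeneralLinearGroup.mkOfDetNeZero
    !![HahnSeries.single (1 : ℤ) (1 : F), HahnSeries.C l; 0, 1]
    (by simp [Matrix.det_fin_two_of])

/-- `x ∈ 𝒪 = F[[t]]`, i.e. no negative coefficients. -/
def InO {F : Type*} [Field F] (x : LaurentSeries F) : Prop :=
  ∀ n : ℤ, n < 0 → x.coeff n = 0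

/-- `x ∈ t𝒪`. -/
def InTO {F : Type*} [Field F] (x : LaurentSeries F) : Prop :=
  ∀ n : ℤ, n ≤ 0 → x.coeff n = 0

/-- `x ∈ 𝒪ˣ`, i.e. `x ∈ 𝒪` with nonzero constant term. -/
def InOUnits {F : Type*} [Field F] (x : LaurentSeries F) : Prop :=
  InO x ∧ x.coeff 0 ≠ 0

/-- membership in the pro-p Iwahori subgroup `I₁`: matrices `(a, b; c, d)`
with entries in `𝒪`, determinant in `𝒪ˣ`, and `a − 1, d − 1, c ∈ t𝒪`. -/
def InI1 {F : Type*} [Field F] (g : GL (Fin 2) (LaurentSeries F)) : Prop :=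
  (∀ i j, InO ((g : Matrix (Fin 2) (Fin 2) (LaurentSeries F)) i j)) ∧
  InOUnits (Matrix.det (g : Matrix (Fin 2) (Fin 2) (LaurentSeries F))) ∧
  InTO ((g : Matrix (Fin 2) (Fin 2) (LaurentSeries F)) 0 0 - 1) ∧
  InTO ((g : Matrix (Fin 2) (Fin 2) (LaurentSeries F)) 1 1 - 1) ∧
  InTO ((g : Matrix (Fin 2) (Fin 2) (LaurentSeries F)) 1 0)

/-- membership in `K_n = {g ∈ GL₂(𝒪) : g ≡ 1 (mod tⁿ)}`. -/
def InKn {F : Type*} [Field F] (n : ℕ) (g : GL (Fin 2) (LaurentSeries F)) : Prop :=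
  (∀ i j, InO ((g : Matrix (Fin 2) (Fin 2) (LaurentSeries F)) i j)) ∧
  InOUnits (Matrix.det (g : Matrix (Fin 2) (Fin 2) (LaurentSeries F))) ∧
  (∀ i j, ∀ m : ℤ, m < (n : ℤ) →
    (((g : Matrix (Fin 2) (Fin 2) (LaurentSeries F)) - 1) i j).coeff m = 0)

section Aux

variable {F : Type*} [Field F]

/-! ### Coefficient vanishing predicates -/

/-- `clt m x` : all coefficients of `x` below `m` vanish. -/
def clt (m : ℤ) (x : LaurentSeries F) : Prop := ∀ n : ℤ, n < m → x.coeff n = 0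

lemma clt_zero (m : ℤ) : clt m (0 : LaurentSeries F) := fun _ _ => rfl

lemma clt_order_le {m : ℤ} {x : LaurentSeries F} (hx : x ≠ 0) (h : clt m x) : m ≤ x.order := by
  by_contra hc
  exact (mt HahnSeries.coeff_order_eq_zero.mp hx) (h _ (not_le.1 hc))

lemma clt_of_order {m : ℤ} {x : LaurentSeries F} (h : m ≤ x.order) : clt m x :=
  fun _ hn => HahnSeries.coeff_eq_zero_of_lt_order (lt_of_lt_of_le hn h)

lemma clt_mul {mx my : ℤ} {x y : LaurentSeries F} (hx : clt mx x) (hy : clt my y) :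
    clt (mx + my) (x * y) := by
  rcases eq_or_ne x 0 with rfl | hx0
  · simpa using clt_zero _
  rcases eq_or_ne y 0 with rfl | hy0
  · simpa using clt_zero _
  apply clt_of_order
  rw [HahnSeries.order_mul hx0 hy0]
  exact add_le_add (clt_order_le hx0 hx) (clt_order_le hy0 hy)

lemma clt_add {m : ℤ} {x y : LaurentSeries F} (hx : clt m x) (hy : clt m y) : clt m (x + y) := by
  intro n hn; rw [HahnSeries.coeff_add, hx n hn, hy n hn, add_zero]

lemma clt_neg {m : ℤ} {x : LaurentSeries F} (hx : clt m x) : clt m (-x) := by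
  intro n hn; rw [HahnSeries.coeff_neg, hx n hn, neg_zero]

lemma clt_sub {m : ℤ} {x y : LaurentSeries F} (hx : clt m x) (hy : clt m y) : clt m (x - y) := by
  rw [sub_eq_add_neg]; exact clt_add hx (clt_neg hy)

lemma clt_single {m a : ℤ} (h : m ≤ a) (r : F) : clt m (HahnSeries.single a r) := by
  intro n hn
  rw [HahnSeries.coeff_single_of_ne (by omega : n ≠ a)]

lemma clt_one {m : ℤ} (h : m ≤ 0) : clt m (1 : LaurentSeries F) := by
  rw [← HahnSeries.single_zero_one]; exact clt_single h 1

lemma clt_C {m : ℤ} (h : m ≤ 0) (r : F) : clt m (HahnSeries.C r : LaurentSeries F) := by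
  rw [HahnSeries.C_apply]; exact clt_single h r

lemma clt_mono {m m' : ℤ} {x : LaurentSeries F} (h : m' ≤ m) (hx : clt m x) : clt m' x :=
  fun n hn => hx n (lt_of_lt_of_le hn h)

lemma order_eq_zero' {x : LaurentSeries F} (h0 : clt 0 x) (h : x.coeff 0 ≠ 0) : x.order = 0 :=
  le_antisymm (HahnSeries.order_le_of_coeff_ne_zero h)
    (clt_order_le (fun hx => h (by simp [hx])) h0)

lemma order_inv' {x : LaurentSeries F} (hx : x ≠ 0) :
    (x⁻¹ : LaurentSeries F).order = -x.order := by
  have hix : x⁻¹ ≠ 0 := inv_ne_zero hx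
  have := HahnSeries.order_mul hix hx
  rw [inv_mul_cancel₀ hx, HahnSeries.order_one] at this
  omega

lemma clt_inv {x : LaurentSeries F} (h0 : clt 0 x) (h : x.coeff 0 ≠ 0) :
    clt 0 (x⁻¹ : LaurentSeries F) := by
  have hx0 : x ≠ 0 := fun hx => h (by simp [hx])
  exact clt_of_order (by rw [order_inv' hx0, order_eq_zero' h0 h]; norm_num)

lemma coeff0_inv_ne_zero {x : LaurentSeries F} (h0 : clt 0 x) (h : x.coeff 0 ≠ 0) :
    (x⁻¹ : LaurentSeries F).coeff 0 ≠ 0 := by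
  have hx0 : x ≠ 0 := fun hx => h (by simp [hx])
  have hix : x⁻¹ ≠ 0 := inv_ne_zero hx0
  have := mt HahnSeries.coeff_order_eq_zero.mp hix
  rwa [order_inv' hx0, order_eq_zero' h0 h, neg_zero] at this

lemma coeff0_mul_ne_zero {x y : LaurentSeries F} (hx : clt 0 x) (hx0 : x.coeff 0 ≠ 0)
    (hy : clt 0 y) (hy0 : y.coeff 0 ≠ 0) : (x * y).coeff 0 ≠ 0 := by
  have hxne : x ≠ 0 := fun h => hx0 (by simp [h])
  have hyne : y ≠ 0 := fun h => hy0 (by simp [h])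
  have := HahnSeries.coeff_mul_order_add_order x y
  rw [order_eq_zero' hx hx0, order_eq_zero' hy hy0, add_zero,
    HahnSeries.leadingCoeff_eq, HahnSeries.leadingCoeff_eq,
    order_eq_zero' hx hx0, order_eq_zero' hy hy0] at this
  rw [this]
  exact mul_ne_zero hx0 hy0

lemma sum_coeff {σ : Type*} (s : Finset σ) (f : σ → LaurentSeries F) (n : ℤ) :
    (∑ i ∈ s, f i).coeff n = ∑ i ∈ s, (f i).coeff n := by
  classical
  induction s using Finset.induction with
  | empty => simp
  | insert _ _ hji ih => rw [Finset.sum_insert hji, Finset.sum_insert hji, HahnSeries.coeff_add, ih]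

lemma InO_of_clt {x : LaurentSeries F} (h : clt 0 x) : InO x := h

lemma clt_of_InO {x : LaurentSeries F} (h : InO x) : clt 0 x := h

lemma InTO_of_clt {x : LaurentSeries F} (h : clt 1 x) : InTO x := fun n hn => h n (by omega)

lemma clt_of_InTO {x : LaurentSeries F} (h : InTO x) : clt 1 x := fun n hn => h n (by omega)

lemma one_coeff_zero : (1 : LaurentSeries F).coeff 0 = 1 := by
  simp [HahnSeries.coeff_one]

/-! ### The matrices -/

noncomputable def UMat (b : LaurentSeries F) : GL (Fin 2) (LaurentSeries F) :=
  Matrix.GeneralLinearGroup.mkOfDetNeZero !![1, b; 0, 1] (by simp [Matrix.det_fin_two_of])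

noncomputable def LMat (c : LaurentSeries F) : GL (Fin 2) (LaurentSeries F) :=
  Matrix.GeneralLinearGroup.mkOfDetNeZero !![1, 0; c, 1] (by simp [Matrix.det_fin_two_of])

noncomputable def DMat (a d : LaurentSeries F) (ha : a ≠ 0) (hd : d ≠ 0) :
    GL (Fin 2) (LaurentSeries F) :=
  Matrix.GeneralLinearGroup.mkOfDetNeZero !![a, 0; 0, d] (by simp [Matrix.det_fin_two_of, ha, hd])

lemma coe_SMat (l : F) : (SMat l : Matrix (Fin 2) (Fin 2) (LaurentSeries F)) =
    !![HahnSeries.single (1:ℤ) (1:F), HahnSeries.C l; 0, 1] := rfl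

lemma coe_UMat (b : LaurentSeries F) :
    (UMat b : Matrix (Fin 2) (Fin 2) (LaurentSeries F)) = !![1, b; 0, 1] := rfl

lemma coe_LMat (c : LaurentSeries F) :
    (LMat c : Matrix (Fin 2) (Fin 2) (LaurentSeries F)) = !![1, 0; c, 1] := rfl

lemma coe_DMat (a d : LaurentSeries F) (ha : a ≠ 0) (hd : d ≠ 0) :
    (DMat a d ha hd : Matrix (Fin 2) (Fin 2) (LaurentSeries F)) = !![a, 0; 0, d] := rfl

lemma UMat_mul (x y : LaurentSeries F) : UMat x * UMat y = UMat (x + y) := by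
  apply Matrix.GeneralLinearGroup.ext
  intro i j
  simp only [Matrix.GeneralLinearGroup.coe_mul, coe_UMat, Matrix.mul_fin_two]
  fin_cases i <;> fin_cases j <;>
    simp only [Fin.zero_eta, Fin.mk_one, Fin.isValue, Matrix.of_apply, Matrix.cons_val',
      Matrix.cons_val_zero, Matrix.cons_val_one, Matrix.head_cons, Matrix.empty_val',
      Matrix.cons_val_fin_one, Matrix.head_fin_const] <;> ring

/-! ### Group identities -/

noncomputable def shiftO (b : LaurentSeries F) : LaurentSeries F :=
  HahnSeries.single (-1 : ℤ) (1 : F) * (b - HahnSeries.C (b.coeff 0))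

lemma t_mul_shiftO (b : LaurentSeries F) :
    HahnSeries.single (1:ℤ) (1:F) * shiftO b = b - HahnSeries.C (b.coeff 0) := by
  rw [shiftO, ← mul_assoc, HahnSeries.single_mul_single, one_mul]
  norm_num [HahnSeries.single_zero_one]

lemma clt_shiftO {b : LaurentSeries F} (hb : clt 0 b) : clt 0 (shiftO b) := by
  have h1 : clt 1 (b - HahnSeries.C (b.coeff 0)) := by
    intro n hn
    rcases lt_or_eq_of_le (by omega : n ≤ 0) with h | h
    · rw [HahnSeries.coeff_sub, hb n h, clt_C le_rfl _ n h, sub_zero]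
    · subst h
      rw [HahnSeries.coeff_sub, HahnSeries.C_apply, HahnSeries.coeff_single_same, sub_self]
  have := clt_mul (clt_single (le_refl (-1)) (1:F)) h1
  simpa [shiftO] using this

lemma idB (b : LaurentSeries F) (l : F) :
    UMat b * SMat l = SMat (l + b.coeff 0) * UMat (shiftO b) := by
  apply Matrix.GeneralLinearGroup.ext
  intro i j
  simp only [Matrix.GeneralLinearGroup.coe_mul, coe_UMat, coe_SMat, Matrix.mul_fin_two]
  fin_cases i <;> fin_cases j <;>
    simp only [Fin.zero_eta, Fin.mk_one, Fin.isValue, Matrix.of_apply, Matrix.cons_val',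
      Matrix.cons_val_zero, Matrix.cons_val_one, Matrix.head_cons, Matrix.empty_val',
      Matrix.cons_val_fin_one, Matrix.head_fin_const] <;>
    first
      | ring1
      | (rw [map_add]; linear_combination t_mul_shiftO b)
      | (rw [map_add]; linear_combination -t_mul_shiftO b)

lemma idA (al de β : LaurentSeries F) (ha : al ≠ 0) (hd : de ≠ 0) (l c : F)
    (hβ : HahnSeries.single (1:ℤ) (1:F) * al * β =
      al * HahnSeries.C l - HahnSeries.C (c * l) * de) :
    DMat al de ha hd * SMat l = SMat (c * l) * (DMat al de ha hd * UMat β) := by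
  apply Matrix.GeneralLinearGroup.ext
  intro i j
  simp only [Matrix.GeneralLinearGroup.coe_mul, coe_UMat, coe_SMat, coe_DMat, Matrix.mul_fin_two]
  fin_cases i <;> fin_cases j <;>
    simp only [Fin.zero_eta, Fin.mk_one, Fin.isValue, Matrix.of_apply, Matrix.cons_val',
      Matrix.cons_val_zero, Matrix.cons_val_one, Matrix.head_cons, Matrix.empty_val',
      Matrix.cons_val_fin_one, Matrix.head_fin_const] <;>
    first
      | ring1
      | linear_combination hβ
      | linear_combination -hβ

lemma idC (γ e γ₂ β₃ : LaurentSeries F) (l : F)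
    (ha : (1 - HahnSeries.C l * γ : LaurentSeries F) ≠ 0) (he0 : e ≠ 0)
    (he : (1 - HahnSeries.C l * γ) * e = 1)
    (hγ₂ : γ₂ * (1 - HahnSeries.C l * γ) = γ * HahnSeries.single (1:ℤ) (1:F))
    (hβ₃ : β₃ * HahnSeries.single (1:ℤ) (1:F) * (1 - HahnSeries.C l * γ) =
      -(HahnSeries.C l)^2 * γ) :
    LMat γ * SMat l = SMat l * (LMat γ₂ *
      (DMat (1 - HahnSeries.C l * γ) e ha he0 * UMat β₃)) := by
  set T : LaurentSeries F := HahnSeries.single (1:ℤ) (1:F) with hTdef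
  apply Matrix.GeneralLinearGroup.ext
  intro i j
  simp only [Matrix.GeneralLinearGroup.coe_mul, coe_UMat, coe_SMat, coe_DMat, coe_LMat,
    Matrix.mul_fin_two]
  fin_cases i <;> fin_cases j <;>
    simp only [Fin.zero_eta, Fin.mk_one, Fin.isValue, Matrix.of_apply, Matrix.cons_val',
      Matrix.cons_val_zero, Matrix.cons_val_one, Matrix.head_cons, Matrix.empty_val',
      Matrix.cons_val_fin_one, Matrix.head_fin_const]
  · linear_combination (-(HahnSeries.C l)) * hγ₂
  · linear_combination (-(HahnSeries.C l)*(1 + HahnSeries.C l*γ) + HahnSeries.C l*γ*T*β₃) * he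
      - (1 + HahnSeries.C l*γ*e) * hβ₃ - HahnSeries.C l*β₃ * hγ₂
  · linear_combination -hγ₂
  · linear_combination (γ*T*β₃ - (1 + HahnSeries.C l*γ))*he - γ*e*hβ₃ - β₃*hγ₂

set_option maxHeartbeats 1000000 in
lemma idD (g : GL (Fin 2) (LaurentSeries F)) (a b c d : LaurentSeries F)
    (hg : (g : Matrix (Fin 2) (Fin 2) (LaurentSeries F)) = !![a, b; c, d])
    (ha : a ≠ 0) (hd : d - c * a⁻¹ * b ≠ 0) :
    g = LMat (c * a⁻¹) * (DMat a (d - c * a⁻¹ * b) ha hd * UMat (b * a⁻¹)) := by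
  apply Matrix.GeneralLinearGroup.ext
  intro i j
  simp only [Matrix.GeneralLinearGroup.coe_mul, coe_UMat, coe_DMat, coe_LMat,
    Matrix.mul_fin_two, hg]
  fin_cases i <;> fin_cases j <;>
    simp only [Fin.zero_eta, Fin.mk_one, Fin.isValue, Matrix.of_apply, Matrix.cons_val',
      Matrix.cons_val_zero, Matrix.cons_val_one, Matrix.head_cons, Matrix.empty_val',
      Matrix.cons_val_fin_one, Matrix.head_fin_const] <;>
    field_simp <;> ring

/-! ### Membership lemmas -/

lemma InOUnits_one : InOUnits (1 : LaurentSeries F) :=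
  ⟨InO_of_clt (clt_one le_rfl), by rw [one_coeff_zero]; exact one_ne_zero⟩

lemma InTO_zero : InTO (0 : LaurentSeries F) := fun _ _ => rfl

lemma UMat_mem_I1 {b : LaurentSeries F} (hb : clt 0 b) : InI1 (UMat b) := by
  refine ⟨fun i j => ?_, ?_, ?_, ?_, ?_⟩
  · fin_cases i <;> fin_cases j <;> simp only [coe_UMat, Fin.zero_eta, Fin.mk_one, Fin.isValue,
      Matrix.of_apply, Matrix.cons_val', Matrix.cons_val_zero, Matrix.cons_val_one,
      Matrix.head_cons, Matrix.empty_val', Matrix.cons_val_fin_one, Matrix.head_fin_const] <;>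
      first
        | exact InO_of_clt (clt_one le_rfl)
        | exact InO_of_clt hb
        | exact InO_of_clt (clt_zero 0)
  · rw [coe_UMat, Matrix.det_fin_two_of]
    simpa using InOUnits_one
  · simp only [coe_UMat, Matrix.cons_val', Matrix.cons_val_zero, Matrix.empty_val',
      Matrix.cons_val_fin_one, Matrix.of_apply, sub_self]
    exact InTO_zero
  · simp only [coe_UMat, Matrix.cons_val', Matrix.cons_val_one, Matrix.head_cons,
      Matrix.empty_val', Matrix.cons_val_fin_one, Matrix.head_fin_const, Matrix.of_apply,
      sub_self]
    exact InTO_zero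
  · simp only [coe_UMat, Matrix.cons_val', Matrix.cons_val_zero, Matrix.cons_val_one,
      Matrix.head_cons, Matrix.empty_val', Matrix.cons_val_fin_one, Matrix.head_fin_const,
      Matrix.of_apply]
    exact InTO_zero

lemma DMat_mem_I1 {a d : LaurentSeries F} (ha : a ≠ 0) (hd : d ≠ 0)
    (ha0 : clt 0 a) (hd0 : clt 0 d) (ha1 : clt 1 (a - 1)) (hd1 : clt 1 (d - 1)) :
    InI1 (DMat a d ha hd) := by
  have hca : a.coeff 0 ≠ 0 := by
    have := ha1 0 one_pos
    rw [HahnSeries.coeff_sub, one_coeff_zero] at this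
    intro h; rw [h] at this; norm_num at this
  have hcd : d.coeff 0 ≠ 0 := by
    have := hd1 0 one_pos
    rw [HahnSeries.coeff_sub, one_coeff_zero] at this
    intro h; rw [h] at this; norm_num at this
  refine ⟨fun i j => ?_, ?_, ?_, ?_, ?_⟩
  · fin_cases i <;> fin_cases j <;> simp only [coe_DMat, Fin.zero_eta, Fin.mk_one, Fin.isValue,
      Matrix.of_apply, Matrix.cons_val', Matrix.cons_val_zero, Matrix.cons_val_one,
      Matrix.head_cons, Matrix.empty_val', Matrix.cons_val_fin_one, Matrix.head_fin_const] <;>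
      first
        | exact InO_of_clt ha0
        | exact InO_of_clt hd0
        | exact InO_of_clt (clt_zero 0)
  · rw [coe_DMat, Matrix.det_fin_two_of]
    constructor
    · intro n hn
      have : (a * d - 0 * 0 : LaurentSeries F) = a * d := by ring
      rw [this]
      exact clt_mul ha0 hd0 n (by omega)
    · have : (a * d - 0 * 0 : LaurentSeries F) = a * d := by ring
      rw [this]
      exact coeff0_mul_ne_zero ha0 hca hd0 hcd
  · simp only [coe_DMat, Matrix.cons_val', Matrix.cons_val_zero, Matrix.empty_val',
      Matrix.cons_val_fin_one, Matrix.of_apply]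
    exact InTO_of_clt ha1
  · simp only [coe_DMat, Matrix.cons_val', Matrix.cons_val_one, Matrix.head_cons,
      Matrix.empty_val', Matrix.cons_val_fin_one, Matrix.head_fin_const, Matrix.of_apply]
    exact InTO_of_clt hd1
  · simp only [coe_DMat, Matrix.cons_val', Matrix.cons_val_zero, Matrix.cons_val_one,
      Matrix.head_cons, Matrix.empty_val', Matrix.cons_val_fin_one, Matrix.head_fin_const,
      Matrix.of_apply]
    exact InTO_zero

lemma UMat_mem_Kn {N : ℕ} {b : LaurentSeries F} (hb : clt (N : ℤ) b) : InKn N (UMat b) := by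
  refine ⟨fun i j => ?_, ?_, fun i j m hm => ?_⟩
  · fin_cases i <;> fin_cases j <;> simp only [coe_UMat, Fin.zero_eta, Fin.mk_one, Fin.isValue,
      Matrix.of_apply, Matrix.cons_val', Matrix.cons_val_zero, Matrix.cons_val_one,
      Matrix.head_cons, Matrix.empty_val', Matrix.cons_val_fin_one, Matrix.head_fin_const] <;>
      first
        | exact InO_of_clt (clt_one le_rfl)
        | exact InO_of_clt (clt_mono (by positivity) hb)
        | exact InO_of_clt (clt_zero 0)
  · rw [coe_UMat, Matrix.det_fin_two_of]
    simpa using InOUnits_one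
  · fin_cases i <;> fin_cases j <;>
      simp only [coe_UMat, Matrix.sub_apply, Matrix.one_apply, Fin.zero_eta, Fin.mk_one,
        Fin.isValue, Matrix.of_apply, Matrix.cons_val', Matrix.cons_val_zero,
        Matrix.cons_val_one, Matrix.head_cons, Matrix.empty_val', Matrix.cons_val_fin_one,
        Matrix.head_fin_const] <;>
      norm_num <;>
      first
        | exact hb m hm
        | rfl

lemma LMat_mem_Kn {N : ℕ} {c : LaurentSeries F} (hc : clt (N : ℤ) c) : InKn N (LMat c) := by
  refine ⟨fun i j => ?_, ?_, fun i j m hm => ?_⟩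
  · fin_cases i <;> fin_cases j <;> simp only [coe_LMat, Fin.zero_eta, Fin.mk_one, Fin.isValue,
      Matrix.of_apply, Matrix.cons_val', Matrix.cons_val_zero, Matrix.cons_val_one,
      Matrix.head_cons, Matrix.empty_val', Matrix.cons_val_fin_one, Matrix.head_fin_const] <;>
      first
        | exact InO_of_clt (clt_one le_rfl)
        | exact InO_of_clt (clt_mono (by positivity) hc)
        | exact InO_of_clt (clt_zero 0)
  · rw [coe_LMat, Matrix.det_fin_two_of]
    simpa using InOUnits_one
  · fin_cases i <;> fin_cases j <;>
      simp only [coe_LMat, Matrix.sub_apply, Matrix.one_apply, Fin.zero_eta, Fin.mk_one,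
        Fin.isValue, Matrix.of_apply, Matrix.cons_val', Matrix.cons_val_zero,
        Matrix.cons_val_one, Matrix.head_cons, Matrix.empty_val', Matrix.cons_val_fin_one,
        Matrix.head_fin_const] <;>
      norm_num <;>
      first
        | exact hc m hm
        | rfl

end Aux
-- appended to aux: truncation lemmas
section Trunc
variable {F : Type*} [Field F]

noncomputable def polyOf {N : ℕ} (c : Fin N → F) : LaurentSeries F :=
  ∑ j : Fin N, HahnSeries.single ((j : ℕ) : ℤ) (c j)

noncomputable def truncN (N : ℕ) (b : LaurentSeries F) : LaurentSeries F :=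
  ∑ j ∈ Finset.range N, HahnSeries.single ((j : ℕ) : ℤ) (b.coeff ((j : ℕ) : ℤ))

lemma truncN_eq_polyOf (N : ℕ) (b : LaurentSeries F) :
    truncN N b = polyOf (fun j : Fin N => b.coeff ((j : ℕ) : ℤ)) := by
  rw [truncN, polyOf, Finset.sum_range]

lemma clt_polyOf {N : ℕ} (c : Fin N → F) : clt 0 (polyOf c) := by
  intro n hn
  rw [polyOf, sum_coeff]
  exact Finset.sum_eq_zero fun j _ => HahnSeries.coeff_single_of_ne (by omega)

lemma clt_truncN (N : ℕ) (b : LaurentSeries F) : clt 0 (truncN N b) := by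
  rw [truncN_eq_polyOf]; exact clt_polyOf _

lemma clt_sub_truncN {N : ℕ} {b : LaurentSeries F} (hb : clt 0 b) :
    clt (N : ℤ) (b - truncN N b) := by
  intro n hn
  rw [HahnSeries.coeff_sub, truncN, sum_coeff]
  rcases lt_or_ge n 0 with h | h
  · rw [hb n h,
      Finset.sum_eq_zero fun j _ => HahnSeries.coeff_single_of_ne (by omega : n ≠ ((j:ℕ):ℤ)),
      sub_zero]
  · have hn' : n.toNat < N := by omega
    have hcast : ((n.toNat : ℕ) : ℤ) = n := Int.toNat_of_nonneg h
    rw [Finset.sum_eq_single_of_mem n.toNat (Finset.mem_range.mpr hn')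
        (fun j _ hne => HahnSeries.coeff_single_of_ne (by omega : n ≠ ((j:ℕ):ℤ)))]
    rw [hcast, HahnSeries.coeff_single_same, sub_self]

lemma clt_shiftO_iter {b : LaurentSeries F} (hb : clt 0 b) (n : ℕ) :
    clt 0 (shiftO^[n] b) := by
  induction n generalizing b with
  | zero => simpa using hb
  | succ n ih =>
    rw [Function.iterate_succ_apply]
    exact ih (clt_shiftO hb)

end Trunc

set_option maxHeartbeats 2000000

/-- the technical core of the proof of Theorem 5.2 of the
paper.  `k` is a field of characteristic `p`, `V` a smooth `k`-linear
representation of `G = GL₂(F((t)))`, `W ⊆ V` a `G`-stable subspace on which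
the operator `S = Σ_{λ∈F} (t, Cλ; 0, 1)` is locally nilpotent.  If `w ∈ V` is,
modulo `W`, an `I₁`-invariant `H`-eigenvector of character `ψ` with
`S·w ≡ λ₀·w`, `λ₀ ≠ 0`, then `w` can be corrected by an element of `W` to an
actual `I₁`-invariant `H`-eigenvector `w'` with `S·w' = λ₀·w'`. -/
theorem statement_11 (p r : ℕ) (hp : p.Prime) (hr : 1 ≤ r)
    (F : Type*) [Field F] [Fintype F] (hF : Fintype.card F = p ^ r)
    (k : Type*) [Field k] [CharP k p]
    (V : Type*) [AddCommGroup V] [Module k V]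
    (ρ : Representation k (GL (Fin 2) (LaurentSeries F)) V)
    -- `V` is smooth:
    (hsmooth : ∀ v : V, ∃ n : ℕ, 1 ≤ n ∧ ∀ g, InKn n g → ρ g v = v)
    -- `W` is a `G`-stable subspace on which `S` is locally nilpotent:
    (W : Submodule k V) (hWstab : ∀ g, ∀ x ∈ W, ρ g x ∈ W)
    (hWnil : ∀ x ∈ W, ∃ n : ℕ, 1 ≤ n ∧ ((∑ l : F, ρ (SMat l)) ^ n) x = 0)
    (w : V) (lam : k) (hlam : lam ≠ 0) (ψ : (Fˣ × Fˣ) →* kˣ)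
    (hI1 : ∀ u, InI1 u → ρ u w - w ∈ W)
    (hH : ∀ (a : Fˣ × Fˣ) (h : GL (Fin 2) (LaurentSeries F)),
      (h : Matrix (Fin 2) (Fin 2) (LaurentSeries F)) =
        !![HahnSeries.C (a.1 : F), 0; 0, HahnSeries.C (a.2 : F)] →
      ρ h w - (ψ a : k) • w ∈ W)
    (hS : (∑ l : F, ρ (SMat l)) w - lam • w ∈ W) :
    ∃ w' : V, w' - w ∈ W ∧
      (∀ u, InI1 u → ρ u w' = w') ∧
      (∀ (a : Fˣ × Fˣ) (h : GL (Fin 2) (LaurentSeries F)),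
        (h : Matrix (Fin 2) (Fin 2) (LaurentSeries F)) =
          !![HahnSeries.C (a.1 : F), 0; 0, HahnSeries.C (a.2 : F)] →
        ρ h w' = (ψ a : k) • w') ∧
      (∑ l : F, ρ (SMat l)) w' = lam • w' := by
  classical
  set Sop : V →ₗ[k] V := ∑ l : F, ρ (SMat l) with hSopdef
  have Sop_apply : ∀ v : V, Sop v = ∑ l : F, ρ (SMat l) v := fun v => by
    rw [hSopdef]; exact LinearMap.sum_apply _ _ _
  clear_value Sop
  have hmulapp : ∀ (g h : GL (Fin 2) (LaurentSeries F)) (v : V),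
      ρ (g * h) v = ρ g (ρ h v) := fun g h v => by rw [_root_.map_mul]; rfl
  have SopW : ∀ x ∈ W, Sop x ∈ W := fun x hx => by
    rw [Sop_apply]; exact Submodule.sum_mem _ fun l _ => hWstab _ _ hx
  have reindex : ∀ f : F → F, Function.Bijective f → ∀ v : V,
      ∑ l : F, ρ (SMat (f l)) v = Sop v := fun f hf v => by
    rw [Sop_apply]
    exact Fintype.sum_bijective f hf _ _ fun l => rfl
  have kill : ∀ y ∈ W, Sop y = lam • y → y = 0 := by
    intro y hy he
    obtain ⟨n, hn1, hn0⟩ := hWnil y hy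
    have hpow : ∀ j : ℕ, (Sop ^ j) y = lam ^ j • y := by
      intro j; induction j with
      | zero => simp
      | succ j ih =>
        rw [pow_succ', Module.End.mul_apply, ih, _root_.map_smul, he, smul_smul, ← pow_succ]
    rw [hpow n] at hn0
    exact (smul_eq_zero.mp hn0).resolve_left (pow_ne_zero _ hlam)
  -- Step 1 : correct the S-eigenvalue
  obtain ⟨m, hm1, hmx⟩ := hWnil _ hS
  have hlm : lam ^ m ≠ 0 := pow_ne_zero _ hlam
  set w₁ : V := (lam ^ m)⁻¹ • ((Sop ^ m) w) with hw₁def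
  have hdiffj : ∀ j : ℕ, (Sop ^ j) w - lam ^ j • w ∈ W := by
    intro j; induction j with
    | zero => simpa using Submodule.zero_mem W
    | succ j ih =>
      have e1 : (Sop ^ (j + 1)) w - lam ^ (j + 1) • w
          = Sop ((Sop ^ j) w - lam ^ j • w) + lam ^ j • (Sop w - lam • w) := by
        rw [pow_succ' Sop j, Module.End.mul_apply, _root_.map_sub, _root_.map_smul, smul_sub, smul_smul,
          ← pow_succ]
        abel
      rw [e1]
      exact Submodule.add_mem _ (SopW _ ih) (Submodule.smul_mem _ _ hS)
  have hw₁W : w₁ - w ∈ W := by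
    have e : w₁ - w = (lam ^ m)⁻¹ • ((Sop ^ m) w - lam ^ m • w) := by
      rw [hw₁def, smul_sub, smul_smul, inv_mul_cancel₀ hlm, one_smul]
    rw [e]; exact Submodule.smul_mem _ _ (hdiffj m)
  have eig : Sop w₁ = lam • w₁ := by
    have hcomm : Sop ((Sop ^ m) w) = (Sop ^ m) (Sop w) := by
      rw [← Module.End.mul_apply, ← Module.End.mul_apply, ← pow_succ', ← pow_succ]
    have hsw : Sop w = lam • w + (Sop w - lam • w) := by abel
    rw [hw₁def, _root_.map_smul, hcomm, hsw, _root_.map_add, _root_.map_smul, hmx, add_zero]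
    exact smul_comm _ _ _
  clear_value w₁
  have hI1' : ∀ u, InI1 u → ρ u w₁ - w₁ ∈ W := by
    intro u hu
    have e : ρ u w₁ - w₁ = (ρ u (w₁ - w) - (w₁ - w)) + (ρ u w - w) := by
      rw [_root_.map_sub]; abel
    rw [e]
    exact Submodule.add_mem _ (Submodule.sub_mem _ (hWstab u _ hw₁W) hw₁W) (hI1 u hu)
  have hH' : ∀ (a : Fˣ × Fˣ) (h : GL (Fin 2) (LaurentSeries F)),
      (h : Matrix (Fin 2) (Fin 2) (LaurentSeries F)) =
        !![HahnSeries.C ((a.1 : F)), 0; 0, HahnSeries.C ((a.2 : F))] →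
      ρ h w₁ - (ψ a : k) • w₁ ∈ W := by
    intro a h hmat
    have e : ρ h w₁ - (ψ a : k) • w₁
        = (ρ h (w₁ - w) - (ψ a : k) • (w₁ - w)) + (ρ h w - (ψ a : k) • w) := by
      rw [_root_.map_sub, smul_sub]; abel
    rw [e]
    exact Submodule.add_mem _ (Submodule.sub_mem _ (hWstab h _ hw₁W)
      (Submodule.smul_mem _ _ hw₁W)) (hH a h hmat)
  obtain ⟨N, hN1, hNfix⟩ := hsmooth w₁
  -- Step 2 : upper unipotents fix w₁
  have hUrec : ∀ b : LaurentSeries F,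
      lam • (ρ (UMat b) w₁ - w₁) = Sop (ρ (UMat (shiftO b)) w₁ - w₁) := by
    intro b
    have h1 : ρ (UMat b) (Sop w₁)
        = ∑ l : F, ρ (SMat (l + b.coeff 0)) (ρ (UMat (shiftO b)) w₁) := by
      rw [Sop_apply, _root_.map_sum]
      exact Finset.sum_congr rfl fun l _ => by rw [← hmulapp, idB b l, hmulapp]
    have h2 : ∑ l : F, ρ (SMat (l + b.coeff 0)) (ρ (UMat (shiftO b)) w₁)
        = Sop (ρ (UMat (shiftO b)) w₁) :=
      reindex _ (Equiv.addRight (b.coeff 0)).bijective _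
    calc lam • (ρ (UMat b) w₁ - w₁)
        = ρ (UMat b) (Sop w₁) - Sop w₁ := by rw [eig, _root_.map_smul, smul_sub]
      _ = Sop (ρ (UMat (shiftO b)) w₁) - Sop w₁ := by rw [h1, h2]
      _ = Sop (ρ (UMat (shiftO b)) w₁ - w₁) := by rw [_root_.map_sub]
  have hUiter : ∀ (n : ℕ) (b : LaurentSeries F),
      lam ^ n • (ρ (UMat b) w₁ - w₁) = (Sop ^ n) (ρ (UMat (shiftO^[n] b)) w₁ - w₁) := by
    intro n
    induction n with
    | zero => intro b; simp
    | succ n ih =>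
      intro b
      have e1 : lam ^ (n + 1) • (ρ (UMat b) w₁ - w₁)
          = lam ^ n • (lam • (ρ (UMat b) w₁ - w₁)) := by
        rw [smul_smul, ← pow_succ]
      rw [e1, hUrec b, ← _root_.map_smul, ih (shiftO b), ← Module.End.mul_apply, ← pow_succ',
        Function.iterate_succ_apply]
  have hUtrunc : ∀ b : LaurentSeries F, clt 0 b →
      ρ (UMat b) w₁ = ρ (UMat (truncN N b)) w₁ := by
    intro b hb
    have hmul : UMat (truncN N b) * UMat (b - truncN N b) = UMat b := by
      rw [UMat_mul]; congr 1; ring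
    rw [← hmul, hmulapp, hNfix _ (UMat_mem_Kn (clt_sub_truncN hb))]
  have hecW : ∀ c : Fin N → F, ρ (UMat (polyOf c)) w₁ - w₁ ∈ W :=
    fun c => hI1' _ (UMat_mem_I1 (clt_polyOf c))
  choose nc hnc1 hnc0 using fun c : Fin N → F => hWnil _ (hecW c)
  set M := (Finset.univ : Finset (Fin N → F)).sup nc with hMdef
  have hM : ∀ c : Fin N → F, (Sop ^ M) (ρ (UMat (polyOf c)) w₁ - w₁) = 0 := by
    intro c
    have hle : nc c ≤ M := Finset.le_sup (Finset.mem_univ c)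
    have e : (Sop ^ M) = (Sop ^ (M - nc c)) * Sop ^ nc c := by
      rw [← pow_add]; congr 1; omega
    rw [e, Module.End.mul_apply, hnc0, _root_.map_zero]
  have eU : ∀ b : LaurentSeries F, clt 0 b → ρ (UMat b) w₁ = w₁ := by
    intro b hb
    have h0 := hUiter M b
    have hsh : clt 0 (shiftO^[M] b) := clt_shiftO_iter hb M
    rw [hUtrunc _ hsh, truncN_eq_polyOf, hM] at h0
    exact sub_eq_zero.mp ((smul_eq_zero.mp h0).resolve_left (pow_ne_zero _ hlam))
  -- Step 3 : diagonal matrices almost commute with S on w₁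
  have hT0 : (HahnSeries.single (1 : ℤ) (1 : F) : LaurentSeries F) ≠ 0 :=
    HahnSeries.single_ne_zero one_ne_zero
  have hTord : (HahnSeries.single (1 : ℤ) (1 : F) : LaurentSeries F).order = 1 :=
    HahnSeries.order_single one_ne_zero
  have dia : ∀ (α δ : LaurentSeries F) (hα : α ≠ 0) (hδ : δ ≠ 0),
      clt 0 α → α.coeff 0 ≠ 0 → clt 0 δ → δ.coeff 0 ≠ 0 →
      ρ (DMat α δ hα hδ) (Sop w₁) = Sop (ρ (DMat α δ hα hδ) w₁) := by
    intro α δ hα hδ hα0 hαc hδ0 hδc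
    set c : F := α.coeff 0 * (δ.coeff 0)⁻¹ with hcdef
    have hc0 : c ≠ 0 := mul_ne_zero hαc (inv_ne_zero hδc)
    have key : ∀ l : F, ρ (DMat α δ hα hδ) (ρ (SMat l) w₁)
        = ρ (SMat (c * l)) (ρ (DMat α δ hα hδ) w₁) := by
      intro l
      set T : LaurentSeries F := HahnSeries.single (1 : ℤ) (1 : F) with hTdef
      set num : LaurentSeries F := α * HahnSeries.C l - HahnSeries.C (c * l) * δ with hnumdef
      have hnum1 : clt 1 num := by
        intro n hn
        rcases lt_or_eq_of_le (by omega : n ≤ 0) with h | h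
        · have t1 : clt 0 (α * HahnSeries.C l) := by
            simpa using clt_mul hα0 (clt_C le_rfl l)
          have t2 : clt 0 (HahnSeries.C (c * l) * δ) := by
            simpa using clt_mul (clt_C le_rfl (c * l)) hδ0
          rw [hnumdef, HahnSeries.coeff_sub, t1 n h, t2 n h, sub_zero]
        · subst h
          rw [hnumdef, HahnSeries.coeff_sub, HahnSeries.C_apply, HahnSeries.C_apply,
            HahnSeries.coeff_mul_single_zero, HahnSeries.coeff_single_zero_mul, hcdef]
          field_simp
          simp
      set β : LaurentSeries F := num * (T * α)⁻¹ with hβdef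
      have hTα : T * α ≠ 0 := mul_ne_zero hT0 hα
      have hβeq : T * α * β = α * HahnSeries.C l - HahnSeries.C (c * l) * δ := by
        rw [hβdef, ← hnumdef]
        field_simp
      have hβ0 : clt 0 β := by
        rcases eq_or_ne num 0 with h | h
        · rw [hβdef, h, zero_mul]; exact clt_zero 0
        · have hio : ((T * α)⁻¹ : LaurentSeries F).order = -1 := by
            rw [order_inv' hTα, HahnSeries.order_mul hT0 hα, order_eq_zero' hα0 hαc, hTdef,
              hTord]
            norm_num
          have := clt_mul hnum1 (clt_of_order (le_of_eq hio.symm))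
          exact (by norm_num : (1 : ℤ) + -1 = 0) ▸ this
      rw [← hmulapp, idA α δ β hα hδ l c hβeq, hmulapp, hmulapp, eU β hβ0]
    rw [Sop_apply, _root_.map_sum]
    calc ∑ l : F, ρ (DMat α δ hα hδ) (ρ (SMat l) w₁)
        = ∑ l : F, ρ (SMat (c * l)) (ρ (DMat α δ hα hδ) w₁) :=
          Finset.sum_congr rfl fun l _ => key l
      _ = Sop (ρ (DMat α δ hα hδ) w₁) := reindex _ (Equiv.mulLeft₀ c hc0).bijective _
  have dkill : ∀ (α δ : LaurentSeries F) (hα : α ≠ 0) (hδ : δ ≠ 0),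
      clt 0 α → α.coeff 0 ≠ 0 → clt 0 δ → δ.coeff 0 ≠ 0 → ∀ κ : k,
      ρ (DMat α δ hα hδ) w₁ - κ • w₁ ∈ W → ρ (DMat α δ hα hδ) w₁ = κ • w₁ := by
    intro α δ hα hδ h1 h2 h3 h4 κ hmem
    have hy : Sop (ρ (DMat α δ hα hδ) w₁ - κ • w₁)
        = lam • (ρ (DMat α δ hα hδ) w₁ - κ • w₁) := by
      rw [_root_.map_sub, _root_.map_smul, ← dia α δ hα hδ h1 h2 h3 h4, eig, _root_.map_smul, smul_sub,
        smul_comm κ lam]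
    exact sub_eq_zero.mp (kill _ hmem hy)
  -- Step 4 : lower unipotents fix w₁
  have eLbase : ∀ γ : LaurentSeries F, clt (N : ℤ) γ → ρ (LMat γ) w₁ = w₁ :=
    fun γ hγ => hNfix _ (LMat_mem_Kn hγ)
  have eLstep : ∀ mm : ℕ, 1 ≤ mm →
      (∀ γ : LaurentSeries F, clt ((mm : ℤ) + 1) γ → ρ (LMat γ) w₁ = w₁) →
      ∀ γ : LaurentSeries F, clt (mm : ℤ) γ → ρ (LMat γ) w₁ = w₁ := by
    intro mm hmm ih γ hγ
    have hγ1 : clt 1 γ := clt_mono (by omega) hγ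
    have key : ∀ l : F, ρ (LMat γ) (ρ (SMat l) w₁) = ρ (SMat l) w₁ := by
      intro l
      have hx1 : clt 1 (HahnSeries.C l * γ) := by
        simpa using clt_mul (clt_C le_rfl l) hγ1
      have hac : (1 - HahnSeries.C l * γ).coeff 0 = 1 := by
        rw [HahnSeries.coeff_sub, one_coeff_zero, hx1 0 one_pos, sub_zero]
      have hacz : (1 - HahnSeries.C l * γ).coeff 0 ≠ 0 := by rw [hac]; exact one_ne_zero
      have ha : (1 - HahnSeries.C l * γ : LaurentSeries F) ≠ 0 := fun h => by
        rw [h] at hacz; simp at hacz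
      have ha0 : clt 0 (1 - HahnSeries.C l * γ) :=
        clt_sub (clt_one le_rfl) (clt_mono one_pos.le hx1)
      have hai0 : clt 0 ((1 - HahnSeries.C l * γ)⁻¹ : LaurentSeries F) := clt_inv ha0 hacz
      have haicz : ((1 - HahnSeries.C l * γ)⁻¹ : LaurentSeries F).coeff 0 ≠ 0 :=
        coeff0_inv_ne_zero ha0 hacz
      have hainz : ((1 - HahnSeries.C l * γ)⁻¹ : LaurentSeries F) ≠ 0 := inv_ne_zero ha
      have hγ₂eq : (γ * HahnSeries.single (1:ℤ) (1:F) * (1 - HahnSeries.C l * γ)⁻¹)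
          * (1 - HahnSeries.C l * γ) = γ * HahnSeries.single (1:ℤ) (1:F) := by
        rw [mul_assoc, inv_mul_cancel₀ ha, mul_one]
      have hγ₂clt : clt ((mm : ℤ) + 1)
          (γ * HahnSeries.single (1:ℤ) (1:F) * (1 - HahnSeries.C l * γ)⁻¹) := by
        have := clt_mul (clt_mul hγ (clt_single (le_refl (1:ℤ)) (1:F))) hai0
        simpa using this
      have hβ₃eq : (-(HahnSeries.C l)^2 * γ * (HahnSeries.single (1:ℤ) (1:F))⁻¹
            * (1 - HahnSeries.C l * γ)⁻¹) * HahnSeries.single (1:ℤ) (1:F)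
          * (1 - HahnSeries.C l * γ) = -(HahnSeries.C l)^2 * γ := by
        have e : (-(HahnSeries.C l)^2 * γ * (HahnSeries.single (1:ℤ) (1:F))⁻¹
              * (1 - HahnSeries.C l * γ)⁻¹) * HahnSeries.single (1:ℤ) (1:F)
            * (1 - HahnSeries.C l * γ)
            = -(HahnSeries.C l)^2 * γ * ((HahnSeries.single (1:ℤ) (1:F))⁻¹
              * HahnSeries.single (1:ℤ) (1:F))
              * ((1 - HahnSeries.C l * γ)⁻¹ * (1 - HahnSeries.C l * γ)) := by ring
        rw [e, inv_mul_cancel₀ hT0, inv_mul_cancel₀ ha, mul_one, mul_one]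
      have hβ₃clt : clt 0 (-(HahnSeries.C l)^2 * γ * (HahnSeries.single (1:ℤ) (1:F))⁻¹
          * (1 - HahnSeries.C l * γ)⁻¹) := by
        have hTi : clt (-1) ((HahnSeries.single (1:ℤ) (1:F))⁻¹ : LaurentSeries F) :=
          clt_of_order (by rw [order_inv' hT0, hTord])
        have hCl2 : clt 0 (-(HahnSeries.C l)^2 : LaurentSeries F) := by
          apply clt_neg
          rw [pow_two]
          simpa using clt_mul (clt_C le_rfl l) (clt_C le_rfl l)
        have := clt_mul (clt_mul (clt_mul hCl2 hγ1) hTi) hai0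
        exact (by norm_num : ((0 : ℤ) + 1 + -1) + 0 = 0) ▸ this
      have hinv1 : ((1 - HahnSeries.C l * γ) * (1 - HahnSeries.C l * γ)⁻¹ : LaurentSeries F)
          = 1 := mul_inv_cancel₀ ha
      have hDfix : ρ (DMat (1 - HahnSeries.C l * γ) ((1 - HahnSeries.C l * γ)⁻¹) ha hainz) w₁
          = w₁ := by
        have hDI1 : InI1 (DMat (1 - HahnSeries.C l * γ) ((1 - HahnSeries.C l * γ)⁻¹)
            ha hainz) := by
          apply DMat_mem_I1 ha hainz ha0 hai0
          · have e : (1 - HahnSeries.C l * γ) - 1 = -(HahnSeries.C l * γ) := by ring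
            rw [e]; exact clt_neg hx1
          · have e : (1 - HahnSeries.C l * γ)⁻¹ - 1
                = (1 - HahnSeries.C l * γ)⁻¹ * (HahnSeries.C l * γ) := by
              have e2 : ((1 - HahnSeries.C l * γ)⁻¹ : LaurentSeries F) - 1
                  = (1 - HahnSeries.C l * γ)⁻¹ * (1 - (1 - HahnSeries.C l * γ)) := by
                rw [mul_sub, mul_one, inv_mul_cancel₀ ha]
              rw [e2, sub_sub_cancel]
            rw [e]
            simpa using clt_mul hai0 hx1
        have := dkill _ _ ha hainz ha0 hacz hai0 haicz 1 (by rw [one_smul]; exact hI1' _ hDI1)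
        rwa [one_smul] at this
      rw [← hmulapp,
        idC γ ((1 - HahnSeries.C l * γ)⁻¹)
          (γ * HahnSeries.single (1:ℤ) (1:F) * (1 - HahnSeries.C l * γ)⁻¹)
          (-(HahnSeries.C l)^2 * γ * (HahnSeries.single (1:ℤ) (1:F))⁻¹
            * (1 - HahnSeries.C l * γ)⁻¹) l ha hainz hinv1 hγ₂eq hβ₃eq,
        hmulapp, hmulapp, hmulapp, eU _ hβ₃clt, hDfix, ih _ hγ₂clt]
    have hfix : ρ (LMat γ) (Sop w₁) = Sop w₁ := by
      have h1 : ρ (LMat γ) (∑ l : F, ρ (SMat l) w₁) = ∑ l : F, ρ (SMat l) w₁ := by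
        rw [_root_.map_sum]
        exact Finset.sum_congr rfl fun l _ => key l
      rw [Sop_apply w₁]
      exact h1
    rw [eig, _root_.map_smul] at hfix
    exact smul_right_injective V hlam hfix
  have eLdown : ∀ d mm : ℕ, 1 ≤ mm → N ≤ mm + d →
      ∀ γ : LaurentSeries F, clt (mm : ℤ) γ → ρ (LMat γ) w₁ = w₁ := by
    intro d
    induction d with
    | zero =>
      intro mm h1 hN γ hγ
      exact eLbase γ (clt_mono (by omega) hγ)
    | succ d ihd =>
      intro mm h1 hN γ hγ
      rcases le_or_gt (N : ℤ) (mm : ℤ) with h | h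
      · exact eLbase γ (clt_mono h hγ)
      · refine eLstep mm h1 (fun γ' hγ' => ihd (mm + 1) (by omega) (by omega) γ' ?_) γ hγ
        have : ((mm + 1 : ℕ) : ℤ) = (mm : ℤ) + 1 := by push_cast; ring
        rw [this]; exact hγ'
  have eL : ∀ γ : LaurentSeries F, clt 1 γ → ρ (LMat γ) w₁ = w₁ := by
    intro γ hγ
    exact eLdown N 1 le_rfl (by omega) γ (by exact_mod_cast hγ)
  -- Final assembly
  refine ⟨w₁, hw₁W, ?_, ?_, ?_⟩
  · -- I₁-invariance
    intro u hu
    obtain ⟨hent, hdet, ha1, hd1, hc1⟩ := hu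
    set a : LaurentSeries F := (u : Matrix (Fin 2) (Fin 2) (LaurentSeries F)) 0 0 with hadef
    set b : LaurentSeries F := (u : Matrix (Fin 2) (Fin 2) (LaurentSeries F)) 0 1 with hbdef
    set cc : LaurentSeries F := (u : Matrix (Fin 2) (Fin 2) (LaurentSeries F)) 1 0 with hccdef
    set d : LaurentSeries F := (u : Matrix (Fin 2) (Fin 2) (LaurentSeries F)) 1 1 with hddef
    have hmat : (u : Matrix (Fin 2) (Fin 2) (LaurentSeries F)) = !![a, b; cc, d] := by
      rw [hadef, hbdef, hccdef, hddef]
      exact Matrix.etaExpand_eq _ |>.symm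
    have hac : a.coeff 0 = 1 := by
      have := ha1 0 le_rfl
      rw [HahnSeries.coeff_sub, one_coeff_zero] at this
      exact sub_eq_zero.mp this
    have hacz : a.coeff 0 ≠ 0 := by rw [hac]; exact one_ne_zero
    have ha : a ≠ 0 := fun h => by rw [h] at hacz; simp at hacz
    have ha0 : clt 0 a := clt_of_InO (hent 0 0)
    have hai0 : clt 0 (a⁻¹ : LaurentSeries F) := clt_inv ha0 hacz
    have hcab1 : clt 1 (cc * a⁻¹ * b) := by
      have := clt_mul (clt_mul (clt_of_InTO hc1) hai0) (clt_of_InO (hent 0 1))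
      simpa using this
    have hdc : d.coeff 0 = 1 := by
      have := hd1 0 le_rfl
      rw [HahnSeries.coeff_sub, one_coeff_zero] at this
      exact sub_eq_zero.mp this
    have hd'c : (d - cc * a⁻¹ * b).coeff 0 = 1 := by
      rw [HahnSeries.coeff_sub, hdc, hcab1 0 one_pos, sub_zero]
    have hd'cz : (d - cc * a⁻¹ * b).coeff 0 ≠ 0 := by rw [hd'c]; exact one_ne_zero
    have hd' : d - cc * a⁻¹ * b ≠ 0 := fun h => by rw [h] at hd'cz; simp at hd'cz
    have hd'0 : clt 0 (d - cc * a⁻¹ * b) :=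
      clt_sub (clt_of_InO (hent 1 1)) (clt_mono one_pos.le hcab1)
    have hd'1 : clt 1 (d - cc * a⁻¹ * b - 1) := by
      have e : d - cc * a⁻¹ * b - 1 = (d - 1) - cc * a⁻¹ * b := by ring
      rw [e]
      exact clt_sub (clt_of_InTO hd1) hcab1
    have hDfix : ρ (DMat a (d - cc * a⁻¹ * b) ha hd') w₁ = w₁ := by
      have := dkill a (d - cc * a⁻¹ * b) ha hd' ha0 hacz hd'0 hd'cz 1
        (by rw [one_smul]
            exact hI1' _ (DMat_mem_I1 ha hd' ha0 hd'0 (clt_of_InTO ha1) hd'1))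
      rwa [one_smul] at this
    rw [idD u a b cc d hmat ha hd', hmulapp, hmulapp,
      eU (b * a⁻¹) (by simpa using clt_mul (clt_of_InO (hent 0 1)) hai0), hDfix,
      eL (cc * a⁻¹) (by simpa using clt_mul (clt_of_InTO hc1) hai0)]
  · -- H-eigenvector
    intro aa h hmat
    have hCa : (HahnSeries.C ((aa.1 : F)) : LaurentSeries F) ≠ 0 :=
      HahnSeries.C_ne_zero (Units.ne_zero _)
    have hCd : (HahnSeries.C ((aa.2 : F)) : LaurentSeries F) ≠ 0 :=
      HahnSeries.C_ne_zero (Units.ne_zero _)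
    have hhd : h = DMat _ _ hCa hCd := Units.ext (by rw [hmat, coe_DMat])
    rw [hhd]
    apply dkill _ _ hCa hCd (clt_C le_rfl _)
      (by rw [HahnSeries.C_apply, HahnSeries.coeff_single_same]; exact Units.ne_zero _)
      (clt_C le_rfl _)
      (by rw [HahnSeries.C_apply, HahnSeries.coeff_single_same]; exact Units.ne_zero _)
    rw [← hhd]
    exact hH' aa h hmat
  · exact eig
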